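/- Let α = -tanh(β/4) and set z = x̂·t̂ ∈ [-1,1]. Then P_j(z) = ((1-α²)/(1 - 2αz + α²))^{2j+2} is a solution of the stationary Fokker-Planck equation 0 = -d/dz [ (α(1+z²) + 2jα(1-z²) - z(1+α²)) P(z) ] + (1/2) d²/dz² [ (1-z²)(1 - 2αz + α²) P(z) ] on (-1,1). -/

import Mathlib

noncomputable section

/-- The stationary P-function P_j(z) = ((1-α²)/(1-2αz+α²))^{2j+2}. -/
def Pfun (α j z : ℝ) : ℝ := ((1 - α ^ 2) / (1 - 2 * α * z + α ^ 2)) ^ (2 * j + 2 : ℝ)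

/-- With α = -tanh(β/4), P_j(z) solves the stationary Fokker-Planck equation
0 = -d/dz[(α(1+z²) + 2jα(1-z²) - z(1+α²)) P] + ½ d²/dz²[(1-z²)(1-2αz+α²) P]
on (-1,1). -/
theorem stmt12 (β j : ℝ) (hj : 0 ≤ j) (α : ℝ) (hα : α = -Real.tanh (β / 4)) :
    ∀ z ∈ Set.Ioo (-1 : ℝ) 1,
    (0 : ℝ) =
      -(deriv (fun w : ℝ =>
          (α * (1 + w ^ 2) + 2 * j * α * (1 - w ^ 2) - w * (1 + α ^ 2)) * Pfun α j w) z) +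
      (1/2) * deriv (deriv (fun w : ℝ =>
          ((1 - w ^ 2) * (1 - 2 * α * w + α ^ 2)) * Pfun α j w)) z := by
  have hα2 : α ^ 2 < 1 := by
    rw [hα, Real.tanh_eq_sinh_div_cosh]
    have h1 := Real.cosh_sq_sub_sinh_sq (β / 4)
    have h2 := Real.cosh_pos (β / 4)
    have h3 : (Real.sinh (β / 4) / Real.cosh (β / 4)) ^ 2 < 1 := by
      rw [div_pow, div_lt_one (by positivity)]
      nlinarith
    calc (-(Real.sinh (β / 4) / Real.cosh (β / 4))) ^ 2
        = (Real.sinh (β / 4) / Real.cosh (β / 4)) ^ 2 := by ring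
      _ < 1 := h3
  have hc : 0 < 1 - α ^ 2 := by linarith
  have hD : ∀ w ∈ Set.Ioo (-1 : ℝ) 1, 0 < 1 - 2 * α * w + α ^ 2 := by
    intro w hw
    obtain ⟨h1, h2⟩ := hw
    nlinarith [sq_nonneg (α - w)]
  set p : ℝ := 2 * j + 2 with hp
  have hp1 : (1 : ℝ) ≤ p := by simp only [hp]; linarith
  -- derivative of Pfun
  have hPd : ∀ w : ℝ, 0 < 1 - 2 * α * w + α ^ 2 →
      HasDerivAt (fun w => Pfun α j w)
        (2 * α * p / (1 - 2 * α * w + α ^ 2) * Pfun α j w) w := by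
    intro w hw
    have hden : HasDerivAt (fun w : ℝ => 1 - 2 * α * w + α ^ 2) (-(2 * α)) w := by
      have := ((hasDerivAt_const w (1 : ℝ)).sub ((hasDerivAt_id w).const_mul (2 * α))).add
        (hasDerivAt_const w (α ^ 2))
      exact this.congr_deriv (by ring)
    have hg : HasDerivAt (fun w : ℝ => (1 - α ^ 2) / (1 - 2 * α * w + α ^ 2))
        ((1 - α ^ 2) * (2 * α) / (1 - 2 * α * w + α ^ 2) ^ 2) w := by
      have := (hasDerivAt_const w (1 - α ^ 2)).div hden hw.ne'
      exact this.congr_deriv (by ring)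
    have hbase : 0 < (1 - α ^ 2) / (1 - 2 * α * w + α ^ 2) := div_pos hc hw
    have hr := (Real.hasDerivAt_rpow_const (x := (1 - α ^ 2) / (1 - 2 * α * w + α ^ 2))
        (p := p) (Or.inl hbase.ne')).comp w hg
    have hkey : p * ((1 - α ^ 2) / (1 - 2 * α * w + α ^ 2)) ^ (p - 1) *
          ((1 - α ^ 2) * (2 * α) / (1 - 2 * α * w + α ^ 2) ^ 2)
        = 2 * α * p / (1 - 2 * α * w + α ^ 2) * Pfun α j w := by
      rw [Real.rpow_sub hbase, Real.rpow_one]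
      unfold Pfun
      rw [hp]
      field_simp
    rw [← hkey]
    exact hr
  intro z hz
  have hDz := hD z hz
  obtain ⟨hz1, hz2⟩ := hz
  -- derivative of the drift coefficient
  have h1pw : HasDerivAt (fun w : ℝ => 1 + w ^ 2) (2 * z) z := by
    exact ((hasDerivAt_const z (1 : ℝ)).add (hasDerivAt_pow 2 z)).congr_deriv (by simp)
  have h1mw : HasDerivAt (fun w : ℝ => 1 - w ^ 2) (-(2 * z)) z := by
    exact ((hasDerivAt_const z (1 : ℝ)).sub (hasDerivAt_pow 2 z)).congr_deriv (by simp)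
  have hA : HasDerivAt (fun w : ℝ => α * (1 + w ^ 2) + 2 * j * α * (1 - w ^ 2) - w * (1 + α ^ 2))
      (α * (2 * z) + 2 * j * α * (-(2 * z)) - (1 + α ^ 2)) z := by
    have h3 : HasDerivAt (fun w : ℝ => w * (1 + α ^ 2)) (1 + α ^ 2) z := by
      simpa using (hasDerivAt_id z).mul_const (1 + α ^ 2)
    exact ((h1pw.const_mul α).add (h1mw.const_mul (2 * j * α))).sub h3
  have hAP : HasDerivAt (fun w : ℝ =>
        (α * (1 + w ^ 2) + 2 * j * α * (1 - w ^ 2) - w * (1 + α ^ 2)) * Pfun α j w)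
      ((α * (2 * z) + 2 * j * α * (-(2 * z)) - (1 + α ^ 2)) * Pfun α j z +
        (α * (1 + z ^ 2) + 2 * j * α * (1 - z ^ 2) - z * (1 + α ^ 2)) *
          (2 * α * p / (1 - 2 * α * z + α ^ 2) * Pfun α j z)) z :=
    hA.mul (hPd z hDz)
  -- the diffusion term: (B P)' = 2 A P on Ioo
  have hFd : ∀ w ∈ Set.Ioo (-1 : ℝ) 1,
      HasDerivAt (fun w : ℝ => ((1 - w ^ 2) * (1 - 2 * α * w + α ^ 2)) * Pfun α j w)
        (2 * ((α * (1 + w ^ 2) + 2 * j * α * (1 - w ^ 2) - w * (1 + α ^ 2)) * Pfun α j w)) w := by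
    intro w hw
    have hDw := hD w hw
    have h1mw' : HasDerivAt (fun v : ℝ => 1 - v ^ 2) (-(2 * w)) w := by
      exact ((hasDerivAt_const w (1 : ℝ)).sub (hasDerivAt_pow 2 w)).congr_deriv (by simp)
    have hden : HasDerivAt (fun v : ℝ => 1 - 2 * α * v + α ^ 2) (-(2 * α)) w := by
      have := ((hasDerivAt_const w (1 : ℝ)).sub ((hasDerivAt_id w).const_mul (2 * α))).add
        (hasDerivAt_const w (α ^ 2))
      exact this.congr_deriv (by ring)
    have hB : HasDerivAt (fun v : ℝ => (1 - v ^ 2) * (1 - 2 * α * v + α ^ 2))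
        ((-(2 * w)) * (1 - 2 * α * w + α ^ 2) + (1 - w ^ 2) * (-(2 * α))) w :=
      h1mw'.mul hden
    have := hB.mul (hPd w hDw)
    refine this.congr_deriv ?_
    have hPne : True := trivial
    rw [show (1 - w ^ 2) * (1 - 2 * α * w + α ^ 2) * (2 * α * p / (1 - 2 * α * w + α ^ 2) * Pfun α j w) = (1 - w ^ 2) * (2 * α * p) * Pfun α j w by field_simp [hDw.ne']; rw [mul_right_comm _ _ (Pfun α j w)]; exact mul_div_cancel_right₀ _ (by nlinarith)]
    rw [hp]
    ring
  have hev : deriv (fun w : ℝ => ((1 - w ^ 2) * (1 - 2 * α * w + α ^ 2)) * Pfun α j w)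
      =ᶠ[nhds z] fun w : ℝ =>
        2 * ((α * (1 + w ^ 2) + 2 * j * α * (1 - w ^ 2) - w * (1 + α ^ 2)) * Pfun α j w) := by
    filter_upwards [isOpen_Ioo.mem_nhds (Set.mem_Ioo.mpr ⟨hz1, hz2⟩)] with w hw
    exact (hFd w hw).deriv
  have h2AP : HasDerivAt (fun w : ℝ =>
        2 * ((α * (1 + w ^ 2) + 2 * j * α * (1 - w ^ 2) - w * (1 + α ^ 2)) * Pfun α j w))
      (2 * ((α * (2 * z) + 2 * j * α * (-(2 * z)) - (1 + α ^ 2)) * Pfun α j z +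
        (α * (1 + z ^ 2) + 2 * j * α * (1 - z ^ 2) - z * (1 + α ^ 2)) *
          (2 * α * p / (1 - 2 * α * z + α ^ 2) * Pfun α j z))) z :=
    hAP.const_mul 2
  rw [hAP.deriv, hev.deriv_eq, h2AP.deriv]
  ring

end
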